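/- Let A ∈ SO(n) be diagonal with entries εᵢ = ±1 and let 0 ≤ c₁ < c₂ < ... < cₙ. For indices α < β and γ < δ, the second derivative ∂²/∂θ∂φ f_C(A·B_{αβ}(θ)·B_{γδ}(φ)) at θ = φ = 0 equals −cα·εα − cβ·εβ if (α,β) = (γ,δ), and 0 otherwise, where f_C(X) = Σₖ cₖ·Xₖₖ. -/

import Mathlib

attribute [local instance] Matrix.normedAddCommGroup Matrix.normedSpace

/-- The rotation matrix `B i j θ`: the identity except with `cos θ` at `(i,i)` and `(j,j)`,
`-sin θ` at `(i,j)` and `sin θ` at `(j,i)`. -/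
noncomputable def rotB (n : ℕ) (i j : Fin n) (θ : ℝ) : Matrix (Fin n) (Fin n) ℝ :=
  Matrix.of fun k l =>
    if k = i ∧ l = i then Real.cos θ
    else if k = j ∧ l = j then Real.cos θ
    else if k = i ∧ l = j then -Real.sin θ
    else if k = j ∧ l = i then Real.sin θ
    else if k = l then 1 else 0

/-- The derivative at `θ = 0` of `rotB n i j`. -/
noncomputable def rotE (n : ℕ) (i j : Fin n) : Matrix (Fin n) (Fin n) ℝ :=
  Matrix.of fun k l => if k = i ∧ l = j then -1 else if k = j ∧ l = i then 1 else 0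

lemma rotB_hasDerivAt (n : ℕ) (i j : Fin n) (hij : i ≠ j) (k l : Fin n) :
    HasDerivAt (fun θ => rotB n i j θ k l) (rotE n i j k l) 0 := by
  unfold rotB rotE
  simp only [Matrix.of_apply]
  by_cases h1 : k = i ∧ l = i
  · obtain ⟨hk, hl⟩ := h1; subst hk; subst hl
    simp [hij, (Ne.symm hij)]
    simpa using Real.hasDerivAt_cos 0
  · by_cases h2 : k = j ∧ l = j
    · obtain ⟨hk, hl⟩ := h2; subst hk; subst hl
      simp [hij, (Ne.symm hij)]
      simpa using Real.hasDerivAt_cos 0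
    · by_cases h3 : k = i ∧ l = j
      · obtain ⟨hk, hl⟩ := h3; subst hk; subst hl
        simp [hij, (Ne.symm hij)]
        simpa using (Real.hasDerivAt_sin 0).fun_neg
      · by_cases h4 : k = j ∧ l = i
        · obtain ⟨hk, hl⟩ := h4; subst hk; subst hl
          simp [hij, (Ne.symm hij)]
          simpa using Real.hasDerivAt_sin 0
        · simp [h1, h2, h3, h4]
          exact hasDerivAt_const 0 _

lemma key_hasDerivAt (n : ℕ) (M C : Matrix (Fin n) (Fin n) ℝ) (i j : Fin n) (hij : i ≠ j)
    (c : Fin n → ℝ) :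
    HasDerivAt (fun θ => ∑ k, c k * (M * rotB n i j θ * C) k k)
      (∑ k, c k * (M * rotE n i j * C) k k) 0 := by
  simp only [Matrix.mul_apply]
  apply HasDerivAt.fun_sum
  intro k _
  apply HasDerivAt.const_mul
  apply HasDerivAt.fun_sum
  intro m _
  apply HasDerivAt.mul_const
  apply HasDerivAt.fun_sum
  intro l _
  exact (rotB_hasDerivAt n i j hij l m).const_mul (M k l)

set_option linter.unnecessarySeqFocus false in
lemma mulE (n : ℕ) (α β γ δ : Fin n) (hαβ : α < β) (hγδ : γ < δ) (k : Fin n) :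
    (rotE n α β * rotE n γ δ) k k =
      (if k = α ∧ α = γ ∧ β = δ then -1 else 0) +
      (if k = β ∧ α = γ ∧ β = δ then -1 else 0) := by
  have hαβ' : α ≠ β := ne_of_lt hαβ
  rw [Matrix.mul_apply]
  by_cases hk : k = α
  · subst hk
    simp only [rotE, Matrix.of_apply, true_and, hαβ', false_and, if_false,
      ite_mul, zero_mul, neg_one_mul]
    rw [Finset.sum_ite_eq' Finset.univ β]
    simp only [Finset.mem_univ, if_true]
    split_ifs <;> simp_all <;> omega
  · by_cases hk2 : k = β
    · subst hk2
      simp only [rotE, Matrix.of_apply, true_and, (Ne.symm hαβ'), false_and, if_false,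
        ite_mul, zero_mul, one_mul]
      rw [Finset.sum_ite_eq' Finset.univ α]
      simp only [Finset.mem_univ, if_true]
      split_ifs <;> simp_all <;> omega
    · simp only [rotE, Matrix.of_apply]
      rw [Finset.sum_eq_zero, if_neg (fun h => hk h.1), if_neg (fun h => hk2 h.1), add_zero]
      intro m _
      simp [hk, hk2]

/-- For a diagonal `A ∈ SO(n)` with diagonal entries `εᵢ = A i i = ±1` and
`0 ≤ c 0 < ... < c (n-1)`, for `α < β` and `γ < δ`, the second derivative
`∂²/∂θ∂φ f_C(A·B_{αβ}(θ)·B_{γδ}(φ))` at `θ = φ = 0` equals `-c α·ε α - c β·ε β` if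
`(α,β) = (γ,δ)` and `0` otherwise, where `f_C(X) = ∑ k, c k * X k k`. -/
theorem second_deriv_fC (n : ℕ) (c : Fin n → ℝ) (hc : StrictMono c) (hc0 : ∀ i, 0 ≤ c i)
    (A : Matrix (Fin n) (Fin n) ℝ) (hA : A ∈ Matrix.specialOrthogonalGroup (Fin n) ℝ)
    (hdiag : A.IsDiag) (hpm : ∀ i, A i i = 1 ∨ A i i = -1)
    (α β γ δ : Fin n) (hαβ : α < β) (hγδ : γ < δ) :
    deriv (fun φ => deriv
        (fun θ => ∑ k, c k * (A * rotB n α β θ * rotB n γ δ φ) k k) 0) 0 =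
      if α = γ ∧ β = δ then -(c α * A α α) - c β * A β β else 0 := by
  have hαβ' : α ≠ β := ne_of_lt hαβ
  have hγδ' : γ ≠ δ := ne_of_lt hγδ
  have h1 : ∀ φ : ℝ, deriv (fun θ => ∑ k, c k * (A * rotB n α β θ * rotB n γ δ φ) k k) 0
      = ∑ k, c k * (A * rotE n α β * rotB n γ δ φ) k k :=
    fun φ => (key_hasDerivAt n A (rotB n γ δ φ) α β hαβ' c).deriv
  simp only [h1]
  have h2 : HasDerivAt (fun φ => ∑ k, c k * (A * rotE n α β * rotB n γ δ φ) k k)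
      (∑ k, c k * (A * rotE n α β * rotE n γ δ) k k) 0 := by
    have := key_hasDerivAt n (A * rotE n α β) 1 γ δ hγδ' c
    simpa [Matrix.mul_one] using this
  rw [h2.deriv]
  -- reduce the entries using that A is diagonal
  have hdiagmul : ∀ (X : Matrix (Fin n) (Fin n) ℝ) (k : Fin n), (A * X) k k = A k k * X k k := by
    intro X k
    rw [Matrix.mul_apply]
    refine Finset.sum_eq_single k (fun l _ hl => by rw [hdiag (Ne.symm hl), zero_mul]) (by simp)
  have hrw : ∀ k : Fin n, c k * (A * rotE n α β * rotE n γ δ) k k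
      = c k * (A k k * ((rotE n α β * rotE n γ δ) k k)) := by
    intro k
    rw [Matrix.mul_assoc, hdiagmul]
  simp only [hrw]
  simp only [mulE n α β γ δ hαβ hγδ]
  by_cases h : α = γ ∧ β = δ
  · obtain ⟨hg, hd⟩ := h
    subst hg; subst hd
    rw [if_pos ⟨rfl, rfl⟩]
    simp only [eq_self_iff_true, and_true, true_and, and_self]
    have hterm : ∀ k : Fin n, c k * (A k k * ((if k = α then (-1:ℝ) else 0)
        + if k = β then -1 else 0))
        = (if k = α then -(c k * A k k) else 0) + (if k = β then -(c k * A k k) else 0) := by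
      intro k
      split_ifs <;> ring
    simp only [hterm]
    rw [Finset.sum_add_distrib, Finset.sum_ite_eq' Finset.univ α, Finset.sum_ite_eq' Finset.univ β]
    simp only [Finset.mem_univ, if_true]
    ring
  · rw [if_neg h]
    apply Finset.sum_eq_zero
    intro k _
    rw [if_neg (fun hh => h hh.2), if_neg (fun hh => h hh.2)]
    simp
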